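/- For all (x, y) ∈ ℝ², the Euclidean norm of F_{a,b,c}(x, y) equals 1; equivalently, sin²(ax)·φ̃₁(y)² + cos²(ax)·φ̃₁(y)² + sin²(bx)·φ̃₂(y)² + cos²(bx)·φ̃₂(y)² + sin²(cx)·φ̃₃(y)² + cos²(cx)·φ̃₃(y)² = 1, so F_{a,b,c} maps ℝ² into the unit sphere S⁵ ⊂ ℝ⁶. -/

import Mathlib

open Real

/-- Rescaled solution `φ̃₁(y) = √((b²+c²−a²)/(2(c²−a²)))·sin y`. -/
noncomputable def phi1 (a b c y : ℝ) : ℝ :=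
  Real.sqrt ((b ^ 2 + c ^ 2 - a ^ 2) / (2 * (c ^ 2 - a ^ 2))) * Real.sin y

/-- Rescaled solution `φ̃₂(y) = √((a²+c²−b²)/(2(c²−b²)))·cos y`. -/
noncomputable def phi2 (a b c y : ℝ) : ℝ :=
  Real.sqrt ((a ^ 2 + c ^ 2 - b ^ 2) / (2 * (c ^ 2 - b ^ 2))) * Real.cos y

/-- Rescaled solution `φ̃₃(y) = √((a²+b²−c²)/(2(b²−c²)))·√(1 − ((b²−a²)/(c²−a²))·sin² y)`. -/
noncomputable def phi3 (a b c y : ℝ) : ℝ :=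
  Real.sqrt ((a ^ 2 + b ^ 2 - c ^ 2) / (2 * (b ^ 2 - c ^ 2))) *
    Real.sqrt (1 - (b ^ 2 - a ^ 2) / (c ^ 2 - a ^ 2) * Real.sin y ^ 2)

/-- The doubly periodic map `F_{a,b,c} : ℝ² → ℝ⁶`, where `ℝ⁶` carries the Euclidean
inner product. -/
noncomputable def Fabc (a b c : ℝ) (p : ℝ × ℝ) : EuclideanSpace ℝ (Fin 6) :=
  (WithLp.equiv 2 (Fin 6 → ℝ)).symm
    ![Real.sin (a * p.1) * phi1 a b c p.2,
      Real.cos (a * p.1) * phi1 a b c p.2,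
      Real.sin (b * p.1) * phi2 a b c p.2,
      Real.cos (b * p.1) * phi2 a b c p.2,
      Real.sin (c * p.1) * phi3 a b c p.2,
      Real.cos (c * p.1) * phi3 a b c p.2]

theorem my_cons_val_five {α : Type*} (a₀ a₁ a₂ a₃ a₄ a₅ : α) :
    ![a₀, a₁, a₂, a₃, a₄, a₅] 5 = a₅ := rfl

/-- For all `(x,y) ∈ ℝ²` the Euclidean norm of `F_{a,b,c}(x,y)` is `1`;
equivalently the sum of squares of its components is `1`, so `F_{a,b,c}` maps `ℝ²`
into the unit sphere `S⁵ ⊂ ℝ⁶`. -/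
theorem Fabc_mem_sphere (a b c : ℝ) (ha : a ^ 2 < c ^ 2) (hb : b ^ 2 < c ^ 2)
    (habc : a ^ 2 + b ^ 2 ≤ c ^ 2) :
    ∀ x y : ℝ,
      Real.sin (a * x) ^ 2 * phi1 a b c y ^ 2 + Real.cos (a * x) ^ 2 * phi1 a b c y ^ 2 +
        Real.sin (b * x) ^ 2 * phi2 a b c y ^ 2 + Real.cos (b * x) ^ 2 * phi2 a b c y ^ 2 +
        Real.sin (c * x) ^ 2 * phi3 a b c y ^ 2 + Real.cos (c * x) ^ 2 * phi3 a b c y ^ 2 = 1 ∧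
      ‖Fabc a b c (x, y)‖ = 1 ∧
      Fabc a b c (x, y) ∈ Metric.sphere (0 : EuclideanSpace ℝ (Fin 6)) 1 := by

  intro x y
  have hca : (0:ℝ) < c ^ 2 - a ^ 2 := by linarith
  have hcb : (0:ℝ) < c ^ 2 - b ^ 2 := by linarith
  have hA : (0:ℝ) ≤ (b ^ 2 + c ^ 2 - a ^ 2) / (2 * (c ^ 2 - a ^ 2)) := by
    apply div_nonneg <;> nlinarith [sq_nonneg b]
  have hB : (0:ℝ) ≤ (a ^ 2 + c ^ 2 - b ^ 2) / (2 * (c ^ 2 - b ^ 2)) := by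
    apply div_nonneg <;> nlinarith [sq_nonneg a]
  have h2 : (c:ℝ) ^ 2 - b ^ 2 ≠ 0 := ne_of_gt hcb
  have h3 : (b:ℝ) ^ 2 - c ^ 2 ≠ 0 := fun h => h2 (by linarith)
  have hC : (0:ℝ) ≤ (a ^ 2 + b ^ 2 - c ^ 2) / (2 * (b ^ 2 - c ^ 2)) := by
    have heq : (a ^ 2 + b ^ 2 - c ^ 2) / (2 * (b ^ 2 - c ^ 2))
        = (c ^ 2 - a ^ 2 - b ^ 2) / (2 * (c ^ 2 - b ^ 2)) := by
      field_simp
      ring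
    rw [heq]
    apply div_nonneg <;> linarith
  have hr : (0:ℝ) ≤ 1 - (b ^ 2 - a ^ 2) / (c ^ 2 - a ^ 2) * Real.sin y ^ 2 := by
    have key : (b ^ 2 - a ^ 2) / (c ^ 2 - a ^ 2) * Real.sin y ^ 2 ≤ 1 := by
      rw [div_mul_eq_mul_div, div_le_one hca]
      nlinarith [Real.sin_sq_le_one y, sq_nonneg (Real.sin y)]
    linarith
  have e1 : phi1 a b c y ^ 2
      = (b ^ 2 + c ^ 2 - a ^ 2) / (2 * (c ^ 2 - a ^ 2)) * Real.sin y ^ 2 := by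
    rw [phi1, mul_pow, Real.sq_sqrt hA]
  have e2 : phi2 a b c y ^ 2
      = (a ^ 2 + c ^ 2 - b ^ 2) / (2 * (c ^ 2 - b ^ 2)) * Real.cos y ^ 2 := by
    rw [phi2, mul_pow, Real.sq_sqrt hB]
  have e3 : phi3 a b c y ^ 2
      = (a ^ 2 + b ^ 2 - c ^ 2) / (2 * (b ^ 2 - c ^ 2)) *
        (1 - (b ^ 2 - a ^ 2) / (c ^ 2 - a ^ 2) * Real.sin y ^ 2) := by
    rw [phi3, mul_pow, Real.sq_sqrt hC, Real.sq_sqrt hr]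
  have hphi : phi1 a b c y ^ 2 + phi2 a b c y ^ 2 + phi3 a b c y ^ 2 = 1 := by
    rw [e1, e2, e3, Real.cos_sq']
    have h1 : (c:ℝ) ^ 2 - a ^ 2 ≠ 0 := ne_of_gt hca
    field_simp
    ring
  have hmain : Real.sin (a * x) ^ 2 * phi1 a b c y ^ 2 + Real.cos (a * x) ^ 2 * phi1 a b c y ^ 2 +
      Real.sin (b * x) ^ 2 * phi2 a b c y ^ 2 + Real.cos (b * x) ^ 2 * phi2 a b c y ^ 2 +
      Real.sin (c * x) ^ 2 * phi3 a b c y ^ 2 + Real.cos (c * x) ^ 2 * phi3 a b c y ^ 2 = 1 := by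
    have ha' := Real.sin_sq_add_cos_sq (a * x)
    have hb' := Real.sin_sq_add_cos_sq (b * x)
    have hc' := Real.sin_sq_add_cos_sq (c * x)
    linear_combination phi1 a b c y ^ 2 * ha' + phi2 a b c y ^ 2 * hb' +
      phi3 a b c y ^ 2 * hc' + hphi
  have hnorm : ‖Fabc a b c (x, y)‖ = 1 := by
    rw [show (1:ℝ) = Real.sqrt 1 from (Real.sqrt_one).symm]
    rw [EuclideanSpace.norm_eq]
    congr 1
    simp only [Fabc, WithLp.equiv_symm_apply, WithLp.ofLp_toLp, Fin.sum_univ_six]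
    simp only [Matrix.cons_val_zero, Matrix.cons_val_one, Matrix.head_cons,
      Matrix.cons_val_two, Matrix.tail_cons, Matrix.cons_val_three, Matrix.cons_val_four,
      Matrix.cons_val_succ, my_cons_val_five, Real.norm_eq_abs, sq_abs]
    calc _ = Real.sin (a * x) ^ 2 * phi1 a b c y ^ 2 + Real.cos (a * x) ^ 2 * phi1 a b c y ^ 2 +
      Real.sin (b * x) ^ 2 * phi2 a b c y ^ 2 + Real.cos (b * x) ^ 2 * phi2 a b c y ^ 2 +
      Real.sin (c * x) ^ 2 * phi3 a b c y ^ 2 + Real.cos (c * x) ^ 2 * phi3 a b c y ^ 2 := by ring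
    _ = 1 := hmain
  exact ⟨hmain, hnorm, by simpa [mem_sphere_zero_iff_norm] using hnorm⟩
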